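/- There is a language capturing the property 'halts on at most finitely many inputs': there exists a set L of codes with ComputablePred (· ∈ L) such that (i) every c ∈ L has finite domain ({x | (c.eval x).Dom}.Finite), and (ii) every code c whose domain {x | (c.eval x).Dom} is finite has some c' ∈ L with eval c' = eval c. -/

import Mathlib

open Nat.Partrec (Code)
open Nat.Partrec.Code

private lemma lookup_map_eq (v : ℕ → ℕ) :
    ∀ (t : List ℕ) (x : ℕ), x ∈ t →
      List.lookup x (t.map fun y => (y, v y)) = some (v x) := by
  intro t
  induction t with
  | nil => intro x hx; simp at hx
  | cons a t ih =>
      intro x hx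
      by_cases h : x = a
      · subst h; simp [List.lookup]
      · rcases List.mem_cons.1 hx with h' | h'
        · exact absurd h' h
        · have hb : (x == a) = false := beq_eq_false_iff_ne.2 h
          simp [List.lookup, hb, ih x h']

private lemma lookup_map_eq_none (v : ℕ → ℕ) :
    ∀ (t : List ℕ) (x : ℕ), x ∉ t →
      List.lookup x (t.map fun y => (y, v y)) = none := by
  intro t
  induction t with
  | nil => intro x _; simp [List.lookup]
  | cons a t ih =>
      intro x hx
      have h1 : x ≠ a := fun h => hx (h ▸ List.mem_cons_self (a := a) (l := t))
      have h2 : x ∉ t := fun h => hx (List.mem_cons_of_mem _ h)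
      have hb : (x == a) = false := beq_eq_false_iff_ne.2 h1
      simp [List.lookup, hb, ih x h2]

private lemma lookup_isSome_mem (l : List (ℕ × ℕ)) (x : ℕ) :
    (l.lookup x).isSome → x ∈ l.map Prod.fst := by
  induction l with
  | nil => simp [List.lookup]
  | cons a l ih =>
      by_cases h : x = a.1
      · intro _; simp [h]
      · have hb : (x == a.1) = false := beq_eq_false_iff_ne.2 h
        simp only [List.lookup, hb, List.map_cons, List.mem_cons]
        intro hs
        exact Or.inr (ih hs)

private lemma le_encode_const : ∀ n : ℕ, n ≤ Encodable.encode (Code.const n) := by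
  intro n
  induction n with
  | zero => exact Nat.zero_le _
  | succ n ih =>
      have := (encode_lt_comp Code.succ (Code.const n)).2
      exact Nat.succ_le_of_lt (lt_of_le_of_lt ih this)

private lemma le_encode_curry (cf : Code) (n : ℕ) :
    n ≤ Encodable.encode (curry cf n) := by
  have h1 := (encode_lt_pair (Code.const n) Code.id).1
  have h2 := (encode_lt_comp cf (Code.pair (Code.const n) Code.id)).2
  exact le_of_lt (lt_of_le_of_lt (le_encode_const n) (lt_trans h1 h2))

theorem language_captures_finite_domain :
    ∃ L : Set Nat.Partrec.Code, ComputablePred (· ∈ L) ∧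
      (∀ c ∈ L, {x : ℕ | (c.eval x).Dom}.Finite) ∧
      (∀ c : Nat.Partrec.Code, {x : ℕ | (c.eval x).Dom}.Finite →
        ∃ c' ∈ L, c'.eval = c.eval) := by
  classical
  -- the table-evaluation function
  set g : ℕ → Option ℕ :=
    fun m => (Denumerable.ofNat (List (ℕ × ℕ)) m.unpair.1).lookup m.unpair.2 with hg
  have hgp : Primrec g := by
    have : Primrec fun p : ℕ × ℕ =>
        (Denumerable.ofNat (List (ℕ × ℕ)) p.1).lookup p.2 :=
      Primrec.listLookup.comp Primrec.snd ((Primrec.ofNat _).comp Primrec.fst)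
    exact this.comp Primrec.unpair
  have hNp : Nat.Partrec fun m => (Part.ofOption (g m) : Part ℕ) :=
    Partrec.nat_iff.1 (Computable.ofOption hgp.to_comp)
  obtain ⟨cf, hcf⟩ := Nat.Partrec.Code.exists_code.1 hNp
  have heval : ∀ n x : ℕ,
      (curry cf n).eval x =
        Part.ofOption ((Denumerable.ofNat (List (ℕ × ℕ)) n).lookup x) := by
    intro n x
    rw [eval_curry, hcf]
    simp [hg, Nat.unpair_pair]
  refine ⟨Set.range (curry cf), ?_, ?_, ?_⟩
  · -- decidability
    have hpred : Primrec₂ fun (c : Code) (n : ℕ) =>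
        decide (Encodable.encode (curry cf n) = Encodable.encode c) :=
      PrimrecPred.decide (Primrec.eq.comp
        (Primrec.encode.comp (primrec₂_curry.comp (Primrec.const cf) Primrec.snd))
        (Primrec.encode.comp Primrec.fst))
    have hfind : Primrec fun c : Code =>
        (List.range (Encodable.encode c + 1)).findIdx
          (fun n => decide (Encodable.encode (curry cf n) = Encodable.encode c)) :=
      Primrec.list_findIdx
        (Primrec.list_range.comp (Primrec.succ.comp Primrec.encode)) hpred
    have hP : PrimrecPred fun c : Code =>
        (List.range (Encodable.encode c + 1)).findIdx
          (fun n => decide (Encodable.encode (curry cf n) = Encodable.encode c))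
          < Encodable.encode c + 1 :=
      Primrec.nat_lt.comp hfind (Primrec.succ.comp Primrec.encode)
    have hiff : ∀ c : Code,
        c ∈ Set.range (curry cf) ↔
          (List.range (Encodable.encode c + 1)).findIdx
            (fun n => decide (Encodable.encode (curry cf n) = Encodable.encode c))
            < Encodable.encode c + 1 := by
      intro c
      constructor
      · rintro ⟨n, rfl⟩
        have hn : n ≤ Encodable.encode (curry cf n) := le_encode_curry cf n
        have hmem : n ∈ List.range (Encodable.encode (curry cf n) + 1) :=
          List.mem_range.2 (Nat.lt_succ_of_le hn)
        have := List.findIdx_lt_length_of_exists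
          (p := fun m => decide (Encodable.encode (curry cf m) =
            Encodable.encode (curry cf n))) ⟨n, hmem, by simp⟩
        simpa [List.length_range] using this
      · intro h
        have hlen : (List.range (Encodable.encode c + 1)).findIdx
            (fun n => decide (Encodable.encode (curry cf n) = Encodable.encode c))
            < (List.range (Encodable.encode c + 1)).length := by
          simpa [List.length_range] using h
        have := List.findIdx_getElem (w := hlen)
        exact ⟨_, Encodable.encode_injective (of_decide_eq_true this)⟩
    have : (fun c : Code => c ∈ Set.range (curry cf)) =
        fun c : Code =>
          (List.range (Encodable.encode c + 1)).findIdx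
            (fun n => decide (Encodable.encode (curry cf n) = Encodable.encode c))
            < Encodable.encode c + 1 := funext fun c => propext (hiff c)
    rw [show (· ∈ Set.range (curry cf)) =
        (fun c : Code => c ∈ Set.range (curry cf)) from rfl, this]
    exact hP.computablePred
  · -- every member has finite domain
    rintro c ⟨n, rfl⟩
    set l := Denumerable.ofNat (List (ℕ × ℕ)) n with hl
    have hsub : {x : ℕ | ((curry cf n).eval x).Dom} ⊆ {x : ℕ | x ∈ l.map Prod.fst} := by
      intro x hx
      simp only [Set.mem_setOf_eq, heval n x, Part.ofOption_dom] at hx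
      exact lookup_isSome_mem l x hx
    exact Set.Finite.subset (List.finite_toSet (l.map Prod.fst)) hsub
  · -- coverage
    intro c hD
    set v : ℕ → ℕ := fun x => (c.eval x).toOption.getD 0 with hv
    set t : List ℕ := hD.toFinset.toList with ht
    set l : List (ℕ × ℕ) := t.map fun y => (y, v y) with hl
    refine ⟨curry cf (Encodable.encode l), ⟨_, rfl⟩, ?_⟩
    funext x
    rw [heval, Denumerable.ofNat_encode]
    by_cases hx : (c.eval x).Dom
    · have hxt : x ∈ t := by
        rw [ht]
        simp [Set.Finite.mem_toFinset, hx]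
      have hvx : v x = (c.eval x).get hx := by
        simp [hv, Part.toOption, hx]
      rw [hl, lookup_map_eq v t x hxt, hvx]
      have : (Part.ofOption (some ((c.eval x).get hx)) : Part ℕ) =
          Part.some ((c.eval x).get hx) := by
        simp [Part.ofOption]
      rw [this]
      exact Part.some_get hx
    · have hxt : x ∉ t := by
        rw [ht]
        simp [Set.Finite.mem_toFinset, hx]
      rw [hl, lookup_map_eq_none v t x hxt]
      rw [Part.eq_none_iff'.2 hx]
      rfl
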